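/- Let Ω be a finite probability space with binary random variables Ŷ, Y, S : Ω → {0,1}, with all events (S=s, Y=y) of positive probability, and suppose Ŷ satisfies equalized odds with respect to Y and S. If Ŷ is independent of Y conditionally on S=1, i.e. P(Ŷ=ŷ | S=1, Y=0) = P(Ŷ=ŷ | S=1, Y=1) for all ŷ, then for every attack a : {0,1} → {0,1}, ½(P(a∘Ŷ=0 | S=0) + P(a∘Ŷ=1 | S=1)) = ½. -/

import Mathlib

open scoped Classical
noncomputable section

/-- Probability of an event under weight function `p` on a finite sample space. -/
def Pr {Omega : Type*} [Fintype Omega] (p : Omega → ℝ) (A : Omega → Prop) : ℝ :=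
  ∑ ω, if A ω then p ω else 0

/-- Conditional probability `P(A | B)`. -/
def cPr {Omega : Type*} [Fintype Omega] (p : Omega → ℝ) (A B : Omega → Prop) : ℝ :=
  Pr p (fun ω => A ω ∧ B ω) / Pr p B

section aux
variable {Omega : Type*} [Fintype Omega] (p : Omega → ℝ)

private lemma fin2_cases : ∀ x : Fin 2, x = 0 ∨ x = 1 := by decide

lemma Pr_congr' (A B : Omega → Prop) (h : ∀ ω, A ω ↔ B ω) : Pr p A = Pr p B := by
  unfold Pr; exact Finset.sum_congr rfl (fun ω _ => by simp [h ω])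

lemma Pr_split_fin2 (X : Omega → Fin 2) (B : Omega → Prop) :
    Pr p B = Pr p (fun ω => X ω = 0 ∧ B ω) + Pr p (fun ω => X ω = 1 ∧ B ω) := by
  unfold Pr
  rw [← Finset.sum_add_distrib]
  refine Finset.sum_congr rfl fun ω _ => ?_
  rcases fin2_cases (X ω) with h | h <;> simp [h]

lemma Pr_comp_split (X : Omega → Fin 2) (a : Fin 2 → Fin 2) (v : Fin 2) (B : Omega → Prop) :
    Pr p (fun ω => a (X ω) = v ∧ B ω)
      = (if a 0 = v then Pr p (fun ω => X ω = 0 ∧ B ω) else 0)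
        + (if a 1 = v then Pr p (fun ω => X ω = 1 ∧ B ω) else 0) := by
  by_cases h0 : a 0 = v <;> by_cases h1 : a 1 = v <;>
    simp only [h0, h1, if_true, if_false, add_zero, zero_add] <;>
    unfold Pr <;>
    [skip; skip; skip; rw [← Finset.sum_const_zero (s := (Finset.univ : Finset Omega))]] <;>
    (try rw [← Finset.sum_add_distrib]) <;>
    refine Finset.sum_congr rfl fun ω _ => ?_ <;>
    rcases fin2_cases (X ω) with h | h <;> simp [h, h0, h1]

lemma cPr_comp_split (X : Omega → Fin 2) (a : Fin 2 → Fin 2) (v : Fin 2) (B : Omega → Prop) :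
    cPr p (fun ω => a (X ω) = v) B
      = (if a 0 = v then cPr p (fun ω => X ω = 0) B else 0)
        + (if a 1 = v then cPr p (fun ω => X ω = 1) B else 0) := by
  unfold cPr
  rw [Pr_comp_split]
  by_cases h0 : a 0 = v <;> by_cases h1 : a 1 = v <;>
    simp [h0, h1, add_div]

/-- conditioning decomposition: `P(A|S=s)` is a convex combination of `P(A|S=s,Y=y)`. -/
lemma cPr_total (A : Omega → Prop) (Y S : Omega → Fin 2) (s : Fin 2)
    (h0 : 0 < Pr p (fun ω => S ω = s ∧ Y ω = 0))
    (h1 : 0 < Pr p (fun ω => S ω = s ∧ Y ω = 1)) :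
    cPr p A (fun ω => S ω = s)
      = (cPr p A (fun ω => S ω = s ∧ Y ω = 0) * Pr p (fun ω => S ω = s ∧ Y ω = 0)
        + cPr p A (fun ω => S ω = s ∧ Y ω = 1) * Pr p (fun ω => S ω = s ∧ Y ω = 1))
        / (Pr p (fun ω => S ω = s ∧ Y ω = 0) + Pr p (fun ω => S ω = s ∧ Y ω = 1)) := by
  unfold cPr
  rw [div_mul_cancel₀ _ (ne_of_gt h0), div_mul_cancel₀ _ (ne_of_gt h1)]
  congr 1
  · rw [Pr_split_fin2 p Y (fun ω => A ω ∧ S ω = s)]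
    congr 1 <;> exact Pr_congr' p _ _ (fun ω => by tauto)
  · rw [Pr_split_fin2 p Y (fun ω => S ω = s)]
    congr 1 <;> exact Pr_congr' p _ _ (fun ω => by tauto)

lemma cPr_self_add (X : Omega → Fin 2) (B : Omega → Prop) (hB : 0 < Pr p B) :
    cPr p (fun ω => X ω = 0) B + cPr p (fun ω => X ω = 1) B = 1 := by
  unfold cPr
  rw [← add_div, ← Pr_split_fin2 p X B, div_self (ne_of_gt hB)]

end aux

theorem stmt_11 {Omega : Type*} [Fintype Omega] (p : Omega → ℝ)
    (hp : ∀ ω, 0 ≤ p ω) (hsum : ∑ ω, p ω = 1)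
    (Yh Y S : Omega → Fin 2)
    (hpos : ∀ s y : Fin 2, 0 < Pr p (fun ω => S ω = s ∧ Y ω = y))
    (heo : ∀ yh y : Fin 2,
        cPr p (fun ω => Yh ω = yh) (fun ω => S ω = 0 ∧ Y ω = y)
          = cPr p (fun ω => Yh ω = yh) (fun ω => S ω = 1 ∧ Y ω = y))
    (hci : ∀ yh : Fin 2,
        cPr p (fun ω => Yh ω = yh) (fun ω => S ω = 1 ∧ Y ω = 0)
          = cPr p (fun ω => Yh ω = yh) (fun ω => S ω = 1 ∧ Y ω = 1)) :
    ∀ a : Fin 2 → Fin 2,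
      (cPr p (fun ω => a (Yh ω) = 0) (fun ω => S ω = 0)
        + cPr p (fun ω => a (Yh ω) = 1) (fun ω => S ω = 1)) / 2 = 1 / 2 := by
  intro a
  -- common conditional distribution of Yh
  set C : Fin 2 → ℝ := fun yh => cPr p (fun ω => Yh ω = yh) (fun ω => S ω = 1 ∧ Y ω = 1) with hC
  have hall : ∀ yh : Fin 2, ∀ s y : Fin 2,
      cPr p (fun ω => Yh ω = yh) (fun ω => S ω = s ∧ Y ω = y) = C yh := by
    intro yh s y
    rcases fin2_cases s with hs | hs <;> rcases fin2_cases y with hy | hy <;> subst hs <;> subst hy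
    · rw [heo yh 0, hci yh]
    · rw [heo yh 1]
    · exact hci yh
    · rfl
  have hCsum : C 0 + C 1 = 1 := cPr_self_add p Yh _ (hpos 1 1)
  -- value of the attack conditionals
  have key : ∀ (v s : Fin 2),
      cPr p (fun ω => a (Yh ω) = v) (fun ω => S ω = s)
        = (if a 0 = v then C 0 else 0) + (if a 1 = v then C 1 else 0) := by
    intro v s
    rw [cPr_total p _ Y S s (hpos s 0) (hpos s 1)]
    rw [cPr_comp_split, cPr_comp_split, hall, hall, hall, hall]
    have hq0 := hpos s 0
    have hq1 := hpos s 1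
    field_simp
  rw [key 0 0, key 1 1]
  rcases fin2_cases (a 0) with h0 | h0 <;> rcases fin2_cases (a 1) with h1 | h1 <;>
    simp [h0, h1] <;> linarith [hCsum]
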